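/- Under the setup of the B-DISTIL convergence analysis (uniform initialization 1/(2N), multiplicative updates with rate η ≤ 1/G, residuals bounded by G, edges γ_t at each round), the averaged ensemble F_T satisfies max_i |F_T(x_i) - g(x_i)| ≤ ln(2N)/(ηT) + η·G² - (1/T)·∑_{t=1}^T γ_t. -/

import Mathlib

lemma exp_le_one_add_add_sq {x : ℝ} (hx : |x| ≤ 1) : Real.exp x ≤ 1 + x + x ^ 2 := by
  have h := Real.exp_bound hx (n := 3) (by norm_num)
  have h1 : ∑ m ∈ Finset.range 3, x ^ m / m.factorial = 1 + x + x ^ 2 / 2 := by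
    simp [Finset.sum_range_succ]
  rw [h1] at h
  have h2 : |x| ^ 3 ≤ x ^ 2 := by
    calc |x| ^ 3 ≤ |x| ^ 2 := pow_le_pow_of_le_one (abs_nonneg x) hx (by norm_num)
      _ = x ^ 2 := sq_abs x
  have h3 := (abs_sub_le_iff.1 h).1
  have h4 : ((Nat.succ 3 : ℕ) : ℝ) / ((Nat.factorial 3 : ℕ) * ((3:ℕ):ℝ)) = 2/9 := by
    norm_num [Nat.factorial]
  rw [h4] at h3
  nlinarith [h3]

open Finset in
theorem bdistil_general_regression_bound
    (N T : ℕ) (hN : 1 ≤ N) (hT : 1 ≤ T)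
    (f : ℕ → Fin N → ℝ) (g : Fin N → ℝ) (G : ℝ) (hG : 0 < G)
    (hbound : ∀ t ∈ Finset.Icc 1 T, ∀ i, |f t i - g i| ≤ G)
    (η : ℝ) (hη : 0 < η) (hηG : η ≤ 1 / G)
    (Kp Kn : ℕ → Fin N → ℝ) (Z : ℕ → ℝ) (γ : ℕ → ℝ)
    (hinitp : ∀ i, Kp 1 i = 1 / (2 * N))
    (hinitn : ∀ i, Kn 1 i = 1 / (2 * N))
    (hZ : ∀ t, Z t = ∑ i, (Kp t i * Real.exp (-η * (f t i - g i)) +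
      Kn t i * Real.exp (η * (f t i - g i))))
    (hupP : ∀ t ∈ Finset.Icc 1 T, ∀ i,
      Kp (t + 1) i = Kp t i * Real.exp (-η * (f t i - g i)) / Z t)
    (hupN : ∀ t ∈ Finset.Icc 1 T, ∀ i,
      Kn (t + 1) i = Kn t i * Real.exp (η * (f t i - g i)) / Z t)
    (hγ : ∀ t, γ t = ∑ i, Kp t i * (f t i - g i) + ∑ i, Kn t i * (g i - f t i)) :
    ∀ i, |(1 / (T : ℝ)) * (∑ t ∈ Finset.Icc 1 T, f t i) - g i| ≤
      Real.log (2 * N) / (η * T) + η * G ^ 2 -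
        (1 / (T : ℝ)) * ∑ t ∈ Finset.Icc 1 T, γ t := by
  have hNpos : (0:ℝ) < N := by exact_mod_cast hN
  have h2N : (0:ℝ) < 2 * N := by linarith
  have hTpos : (0:ℝ) < T := by exact_mod_cast hT
  have hne : (Finset.univ : Finset (Fin N)).Nonempty := ⟨⟨0, hN⟩, Finset.mem_univ _⟩
  have hηG1 : η * G ≤ 1 := by
    rw [le_div_iff₀ hG] at hηG
    linarith
  -- main induction: positivity and normalization
  have main : ∀ t, t ≤ T → ((∀ j, 0 < Kp (t+1) j) ∧ (∀ j, 0 < Kn (t+1) j) ∧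
      ∑ j, (Kp (t+1) j + Kn (t+1) j) = 1) := by
    intro t
    induction t with
    | zero =>
      intro _
      refine ⟨fun j => by rw [hinitp]; positivity,
             fun j => by rw [hinitn]; positivity, ?_⟩
      simp only [hinitp, hinitn]
      rw [Finset.sum_const, Finset.card_univ, Fintype.card_fin]
      field_simp
      ring_nf
      exact mul_inv_cancel₀ hNpos.ne'
    | succ n ih =>
      intro h
      obtain ⟨hp, hn, hs⟩ := ih (Nat.le_of_succ_le h)
      have hmem : n + 1 ∈ Finset.Icc 1 T := Finset.mem_Icc.2 ⟨Nat.le_add_left 1 n, h⟩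
      have hZpos : 0 < Z (n+1) := by
        rw [hZ]
        exact Finset.sum_pos (fun j _ =>
          add_pos (mul_pos (hp j) (Real.exp_pos _)) (mul_pos (hn j) (Real.exp_pos _))) hne
      refine ⟨fun j => by
          rw [hupP _ hmem]
          exact div_pos (mul_pos (hp j) (Real.exp_pos _)) hZpos,
        fun j => by
          rw [hupN _ hmem]
          exact div_pos (mul_pos (hn j) (Real.exp_pos _)) hZpos, ?_⟩
      have : ∑ j, (Kp (n+2) j + Kn (n+2) j) = (∑ j, (Kp (n+1) j * Real.exp (-η * (f (n+1) j - g j)) +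
          Kn (n+1) j * Real.exp (η * (f (n+1) j - g j)))) / Z (n+1) := by
        rw [Finset.sum_div]
        refine Finset.sum_congr rfl fun j _ => ?_
        rw [hupP _ hmem, hupN _ hmem]
        ring
      rw [this, ← hZ, div_self (ne_of_gt hZpos)]
  have hZpos : ∀ t ∈ Finset.Icc 1 T, 0 < Z t := by
    intro t ht
    obtain ⟨h1, h2⟩ := Finset.mem_Icc.1 ht
    obtain ⟨t, rfl⟩ := Nat.exists_eq_add_of_le h1
    obtain ⟨hp, hn, _⟩ := main t (by omega)
    rw [hZ]
    rw [Nat.add_comm 1 t]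
    exact Finset.sum_pos (fun j _ =>
      add_pos (mul_pos (hp j) (Real.exp_pos _)) (mul_pos (hn j) (Real.exp_pos _))) hne
  intro i
  -- product formula
  have prodP : ∀ t, t ≤ T → Kp (t+1) i * ∏ s ∈ Finset.Icc 1 t, Z s =
      (1/(2*N)) * Real.exp (-η * ∑ s ∈ Finset.Icc 1 t, (f s i - g i)) := by
    intro t
    induction t with
    | zero => intro _; simp [hinitp]
    | succ n ih =>
      intro h
      have hmem : n + 1 ∈ Finset.Icc 1 T := Finset.mem_Icc.2 ⟨Nat.le_add_left 1 n, h⟩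
      have hZne := (hZpos _ hmem).ne'
      rw [Finset.prod_Icc_succ_top (Nat.le_add_left 1 n),
        Finset.sum_Icc_succ_top (Nat.le_add_left 1 n), hupP _ hmem i]
      have heq : Kp (n+1) i * Real.exp (-η * (f (n+1) i - g i)) / Z (n+1) *
          ((∏ s ∈ Finset.Icc 1 n, Z s) * Z (n+1))
          = (Kp (n+1) i * ∏ s ∈ Finset.Icc 1 n, Z s) * Real.exp (-η * (f (n+1) i - g i)) := by
        field_simp
      rw [heq, ih (Nat.le_of_succ_le h), mul_add, Real.exp_add]
      ring
  have prodN : ∀ t, t ≤ T → Kn (t+1) i * ∏ s ∈ Finset.Icc 1 t, Z s =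
      (1/(2*N)) * Real.exp (η * ∑ s ∈ Finset.Icc 1 t, (f s i - g i)) := by
    intro t
    induction t with
    | zero => intro _; simp [hinitn]
    | succ n ih =>
      intro h
      have hmem : n + 1 ∈ Finset.Icc 1 T := Finset.mem_Icc.2 ⟨Nat.le_add_left 1 n, h⟩
      have hZne := (hZpos _ hmem).ne'
      rw [Finset.prod_Icc_succ_top (Nat.le_add_left 1 n),
        Finset.sum_Icc_succ_top (Nat.le_add_left 1 n), hupN _ hmem i]
      have heq : Kn (n+1) i * Real.exp (η * (f (n+1) i - g i)) / Z (n+1) *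
          ((∏ s ∈ Finset.Icc 1 n, Z s) * Z (n+1))
          = (Kn (n+1) i * ∏ s ∈ Finset.Icc 1 n, Z s) * Real.exp (η * (f (n+1) i - g i)) := by
        field_simp
      rw [heq, ih (Nat.le_of_succ_le h), mul_add, Real.exp_add]
      ring
  set S : ℝ := ∑ s ∈ Finset.Icc 1 T, (f s i - g i) with hSdef
  obtain ⟨hpT, hnT, hsT⟩ := main T le_rfl
  have hProdPos : 0 < ∏ s ∈ Finset.Icc 1 T, Z s :=
    Finset.prod_pos (fun s hs => hZpos s hs)
  have hKple : Kp (T+1) i ≤ 1 := by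
    rw [← hsT]
    calc Kp (T+1) i ≤ Kp (T+1) i + Kn (T+1) i := le_add_of_nonneg_right (hnT i).le
      _ ≤ ∑ j, (Kp (T+1) j + Kn (T+1) j) :=
        Finset.single_le_sum (fun j _ => add_nonneg (hpT j).le (hnT j).le)
          (Finset.mem_univ i)
  have hKnle : Kn (T+1) i ≤ 1 := by
    rw [← hsT]
    calc Kn (T+1) i ≤ Kp (T+1) i + Kn (T+1) i := le_add_of_nonneg_left (hpT i).le
      _ ≤ ∑ j, (Kp (T+1) j + Kn (T+1) j) :=
        Finset.single_le_sum (fun j _ => add_nonneg (hpT j).le (hnT j).le)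
          (Finset.mem_univ i)
  have hlogProd : Real.log (∏ s ∈ Finset.Icc 1 T, Z s) = ∑ s ∈ Finset.Icc 1 T, Real.log (Z s) :=
    Real.log_prod (fun s hs => (hZpos s hs).ne')
  -- key inequality in both directions
  have keyP : -η * S ≤ Real.log (2*N) + ∑ s ∈ Finset.Icc 1 T, Real.log (Z s) := by
    have h1 : (1/(2*N)) * Real.exp (-η * S) ≤ ∏ s ∈ Finset.Icc 1 T, Z s := by
      rw [← prodP T le_rfl]
      nlinarith [hProdPos, hKple]
    have h2 := Real.log_le_log (show (0:ℝ) < (1/(2*(N:ℝ))) * Real.exp (-η * S) by positivity) h1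
    rw [Real.log_mul (by positivity) (Real.exp_ne_zero _), Real.log_exp, hlogProd,
      one_div, Real.log_inv] at h2
    linarith
  have keyN : η * S ≤ Real.log (2*N) + ∑ s ∈ Finset.Icc 1 T, Real.log (Z s) := by
    have h1 : (1/(2*N)) * Real.exp (η * S) ≤ ∏ s ∈ Finset.Icc 1 T, Z s := by
      rw [← prodN T le_rfl]
      nlinarith [hProdPos, hKnle]
    have h2 := Real.log_le_log (show (0:ℝ) < (1/(2*(N:ℝ))) * Real.exp (η * S) by positivity) h1
    rw [Real.log_mul (by positivity) (Real.exp_ne_zero _), Real.log_exp, hlogProd,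
      one_div, Real.log_inv] at h2
    linarith
  -- bound on log Z t
  have hlogZ : ∀ t ∈ Finset.Icc 1 T, Real.log (Z t) ≤ η^2 * G^2 - η * γ t := by
    intro t ht
    obtain ⟨h1t, h2t⟩ := Finset.mem_Icc.1 ht
    obtain ⟨m, rfl⟩ := Nat.exists_eq_add_of_le h1t
    rw [Nat.add_comm 1 m] at *
    obtain ⟨hp, hn, hs⟩ := main m (by omega)
    have hZle : Z (m+1) ≤ 1 + η^2 * G^2 - η * γ (m+1) := by
      have hstep : Z (m+1) ≤ ∑ j, (Kp (m+1) j * (1 + (-η * (f (m+1) j - g j)) + (-η * (f (m+1) j - g j))^2)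
          + Kn (m+1) j * (1 + (η * (f (m+1) j - g j)) + (η * (f (m+1) j - g j))^2)) := by
        rw [hZ]
        refine Finset.sum_le_sum fun j _ => ?_
        have hb := hbound _ ht j
        have habs1 : |(-η * (f (m+1) j - g j))| ≤ 1 := by
          rw [abs_mul, abs_neg, abs_of_pos hη]
          nlinarith [abs_nonneg (f (m+1) j - g j)]
        have habs2 : |(η * (f (m+1) j - g j))| ≤ 1 := by
          rw [abs_mul, abs_of_pos hη]
          nlinarith [abs_nonneg (f (m+1) j - g j)]
        have e1 := exp_le_one_add_add_sq habs1
        have e2 := exp_le_one_add_add_sq habs2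
        have := (hp j).le; have := (hn j).le
        gcongr
      have hrw : ∑ j, (Kp (m+1) j * (1 + (-η * (f (m+1) j - g j)) + (-η * (f (m+1) j - g j))^2)
          + Kn (m+1) j * (1 + (η * (f (m+1) j - g j)) + (η * (f (m+1) j - g j))^2)) =
          (∑ j, (Kp (m+1) j + Kn (m+1) j)) - η * γ (m+1)
            + η^2 * ∑ j, (Kp (m+1) j + Kn (m+1) j) * (f (m+1) j - g j)^2 := by
        rw [hγ, mul_add, Finset.mul_sum, Finset.mul_sum, Finset.mul_sum,
          ← Finset.sum_add_distrib, ← Finset.sum_sub_distrib, ← Finset.sum_add_distrib]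
        exact Finset.sum_congr rfl fun j _ => by ring
      have hsq : ∑ j, (Kp (m+1) j + Kn (m+1) j) * (f (m+1) j - g j)^2 ≤ G^2 := by
        calc ∑ j, (Kp (m+1) j + Kn (m+1) j) * (f (m+1) j - g j)^2
            ≤ ∑ j, (Kp (m+1) j + Kn (m+1) j) * G^2 := by
              refine Finset.sum_le_sum fun j _ => ?_
              have hb := hbound _ ht j
              have h1 : (f (m+1) j - g j)^2 ≤ G^2 := by
                rw [← sq_abs]
                exact pow_le_pow_left₀ (abs_nonneg _) hb 2
              have := (hp j).le; have := (hn j).le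
              nlinarith
          _ = G^2 := by rw [← Finset.sum_mul, hs, one_mul]
      calc Z (m+1) ≤ _ := hstep
        _ = _ := hrw
        _ ≤ 1 - η * γ (m+1) + η^2 * G^2 := by
            rw [hs]
            have := mul_le_mul_of_nonneg_left hsq (sq_nonneg η)
            linarith
        _ = 1 + η^2 * G^2 - η * γ (m+1) := by ring
    have hZp := hZpos _ ht
    have := Real.log_le_sub_one_of_pos hZp
    linarith
  have hsumlog : ∑ s ∈ Finset.Icc 1 T, Real.log (Z s) ≤
      T * (η^2 * G^2) - η * ∑ s ∈ Finset.Icc 1 T, γ s := by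
    calc ∑ s ∈ Finset.Icc 1 T, Real.log (Z s) ≤ ∑ s ∈ Finset.Icc 1 T, (η^2 * G^2 - η * γ s) :=
          Finset.sum_le_sum hlogZ
      _ = T * (η^2 * G^2) - η * ∑ s ∈ Finset.Icc 1 T, γ s := by
          rw [Finset.sum_sub_distrib, Finset.sum_const, Nat.card_Icc, ← Finset.mul_sum]
          simp
  have key : η * |S| ≤ Real.log (2*N) + T * (η^2 * G^2) - η * ∑ s ∈ Finset.Icc 1 T, γ s := by
    rcases abs_cases S with ⟨h, _⟩ | ⟨h, _⟩ <;> rw [h]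
    · linarith [keyN, hsumlog]
    · linarith [keyP, hsumlog]
  -- finishing
  have hgoalS : (1 / (T : ℝ)) * (∑ t ∈ Finset.Icc 1 T, f t i) - g i = (1 / (T:ℝ)) * S := by
    rw [hSdef, Finset.sum_sub_distrib, Finset.sum_const, Nat.card_Icc]
    push_cast
    field_simp
    rw [nsmul_eq_mul]
  rw [hgoalS, abs_mul, abs_of_pos (by positivity : (0:ℝ) < 1/(T:ℝ))]
  calc (1/(T:ℝ)) * |S| = (η * |S|) / (η * T) := by field_simp
    _ ≤ (Real.log (2*N) + T * (η^2 * G^2) - η * ∑ s ∈ Finset.Icc 1 T, γ s) / (η * T) := by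
        gcongr
    _ = Real.log (2*N) / (η * T) + η * G^2 - (1/(T:ℝ)) * ∑ s ∈ Finset.Icc 1 T, γ s := by
        field_simp
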